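/- Let I ⊆ ℤ \ {0} be symmetric and finite, and let H(I) = span_ℝ{ sin(kx), cos(kx) : k ∈ I }. If j, p ∈ I, then for every nonzero k of the form k = j + p or k = 2j, both sin(kx) and cos(kx) lie in the set C(I) = { η − ∑_{i=1}^{d} ζᵢ ζᵢ' : η, ζᵢ ∈ H(I), d ≥ 1 } (as functions on ℝ). -/

import Mathlib

open Real

/-- The trigonometric span `H(I)` of frequencies in `I`. -/
noncomputable def trigSpan (I : Finset ℤ) : Submodule ℝ (ℝ → ℝ) :=
  Submodule.span ℝ {f : ℝ → ℝ | ∃ k ∈ I,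
    f = (fun x => sin (k * x)) ∨ f = (fun x => cos (k * x))}

/-- The set `C(I) = { η − ∑_{i=1}^{d} ζᵢ ζᵢ' : η, ζᵢ ∈ H(I), d ≥ 1 }`. -/
noncomputable def trigC (I : Finset ℤ) : Set (ℝ → ℝ) :=
  {f : ℝ → ℝ | ∃ (η : ℝ → ℝ) (_ : η ∈ trigSpan I) (d : ℕ) (_ : 1 ≤ d)
    (ζ : Fin d → (ℝ → ℝ)) (_ : ∀ i, ζ i ∈ trigSpan I),
    f = fun x => η x - ∑ i, ζ i x * deriv (ζ i) x}

lemma sin_mem_trigSpan (I : Finset ℤ) (m : ℤ) (hm : m ∈ I) :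
    (fun x : ℝ => sin (m * x)) ∈ trigSpan I :=
  Submodule.subset_span ⟨m, hm, Or.inl rfl⟩

lemma cos_mem_trigSpan (I : Finset ℤ) (m : ℤ) (hm : m ∈ I) :
    (fun x : ℝ => cos (m * x)) ∈ trigSpan I :=
  Submodule.subset_span ⟨m, hm, Or.inr rfl⟩

lemma hasDerivAt_sin_mul (a x : ℝ) :
    HasDerivAt (fun x : ℝ => sin (a * x)) (a * cos (a * x)) x := by
  have h := (Real.hasDerivAt_sin (a * x)).comp x ((hasDerivAt_id x).const_mul a)
  simpa [mul_comm, Function.comp_def] using h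

lemma hasDerivAt_cos_mul (a x : ℝ) :
    HasDerivAt (fun x : ℝ => cos (a * x)) (-(a * sin (a * x))) x := by
  have h := (Real.hasDerivAt_cos (a * x)).comp x ((hasDerivAt_id x).const_mul a)
  simpa [mul_comm, Function.comp_def] using h

-- sin case: ζ₁ = sin(ax) - c sin(bx), ζ₂ = cos(ax) + c cos(bx)
lemma deriv_zeta1s (a b c x : ℝ) :
    deriv (fun x : ℝ => sin (a * x) - c * sin (b * x)) x
      = a * cos (a * x) - c * (b * cos (b * x)) := by
  exact ((hasDerivAt_sin_mul a x).sub ((hasDerivAt_sin_mul b x).const_mul c)).deriv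

lemma deriv_zeta2s (a b c x : ℝ) :
    deriv (fun x : ℝ => cos (a * x) + c * cos (b * x)) x
      = -(a * sin (a * x)) + c * (-(b * sin (b * x))) := by
  exact ((hasDerivAt_cos_mul a x).add ((hasDerivAt_cos_mul b x).const_mul c)).deriv

-- cos case: ζ₁ = sin(ax) - c cos(bx), ζ₂ = cos(ax) + c sin(bx)
lemma deriv_zeta1c (a b c x : ℝ) :
    deriv (fun x : ℝ => sin (a * x) - c * cos (b * x)) x
      = a * cos (a * x) - c * (-(b * sin (b * x))) := by
  exact ((hasDerivAt_sin_mul a x).sub ((hasDerivAt_cos_mul b x).const_mul c)).deriv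

lemma deriv_zeta2c (a b c x : ℝ) :
    deriv (fun x : ℝ => cos (a * x) - c * sin (b * x)) x
      = -(a * sin (a * x)) - c * (b * cos (b * x)) := by
  exact ((hasDerivAt_cos_mul a x).sub ((hasDerivAt_sin_mul b x).const_mul c)).deriv

theorem stmt_7 (I : Finset ℤ) (hzero : (0 : ℤ) ∉ I)
    (hsym : ∀ k ∈ I, -k ∈ I) (j p : ℤ) (hj : j ∈ I) (hp : p ∈ I)
    (k : ℤ) (hk : k ≠ 0) (hkform : k = j + p ∨ k = 2 * j) :
    (fun x : ℝ => sin (k * x)) ∈ trigC I ∧ (fun x : ℝ => cos (k * x)) ∈ trigC I := by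
  -- unify the two cases: k = j + q with q ∈ I
  obtain ⟨q, hq, hkq⟩ : ∃ q, q ∈ I ∧ k = j + q := by
    rcases hkform with h | h
    · exact ⟨p, hp, h⟩
    · exact ⟨j, hj, by omega⟩
  have hkr : (k : ℝ) = (j : ℝ) + (q : ℝ) := by exact_mod_cast congrArg (Int.cast : ℤ → ℝ) hkq
  have hkne : (k : ℝ) ≠ 0 := Int.cast_ne_zero.mpr hk
  set a : ℝ := (j : ℝ)
  set b : ℝ := (q : ℝ)
  set c : ℝ := 1 / (k : ℝ) with hc
  constructor
  · -- sin case
    refine ⟨0, Submodule.zero_mem _, 2, by norm_num,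
      ![fun x => sin (a * x) - c * sin (b * x),
        fun x => cos (a * x) + c * cos (b * x)], ?_, ?_⟩
    · intro i
      fin_cases i
      · simpa [a, b, sub_eq_add_neg, neg_smul, Pi.add_def, Pi.neg_def, Pi.smul_def, smul_eq_mul] using
          (trigSpan I).add_mem (sin_mem_trigSpan I j hj)
            ((trigSpan I).smul_mem (-c) (sin_mem_trigSpan I q hq))
      · simpa [a, b, Pi.add_def, Pi.smul_def, smul_eq_mul] using
          (trigSpan I).add_mem (cos_mem_trigSpan I j hj)
            ((trigSpan I).smul_mem c (cos_mem_trigSpan I q hq))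
    · funext x
      simp only [Fin.sum_univ_two, Matrix.cons_val_zero, Matrix.cons_val_one, Matrix.head_cons,
        deriv_zeta1s, deriv_zeta2s, Pi.zero_apply]
      rw [hkr, add_mul, sin_add]
      have hab : a + b ≠ 0 := by rw [← hkr]; exact hkne
      field_simp [hc, hkr]
      rw [hc, hkr]
      field_simp
      ring
  · -- cos case
    refine ⟨0, Submodule.zero_mem _, 2, by norm_num,
      ![fun x => sin (a * x) - c * cos (b * x),
        fun x => cos (a * x) - c * sin (b * x)], ?_, ?_⟩
    · intro i
      fin_cases i
      · simpa [a, b, sub_eq_add_neg, neg_smul, Pi.add_def, Pi.neg_def, Pi.smul_def, smul_eq_mul] using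
          (trigSpan I).add_mem (sin_mem_trigSpan I j hj)
            ((trigSpan I).smul_mem (-c) (cos_mem_trigSpan I q hq))
      · simpa [a, b, sub_eq_add_neg, neg_smul, Pi.add_def, Pi.neg_def, Pi.smul_def, smul_eq_mul] using
          (trigSpan I).add_mem (cos_mem_trigSpan I j hj)
            ((trigSpan I).smul_mem (-c) (sin_mem_trigSpan I q hq))
    · funext x
      simp only [Fin.sum_univ_two, Matrix.cons_val_zero, Matrix.cons_val_one, Matrix.head_cons,
        deriv_zeta1c, deriv_zeta2c, Pi.zero_apply]
      rw [hkr, add_mul, cos_add]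
      have hab : a + b ≠ 0 := by rw [← hkr]; exact hkne
      field_simp [hc, hkr]
      rw [hc, hkr]
      field_simp
      ring
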